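/- Let α > 0, β ≠ 0 and let l > 0 be a real number with α + α l⁴ − 2(α + 2) l² ≥ 0. Define δ = β²(α + α l⁴ − 2 l² + √α (l² + 1) √(α + α l⁴ − 2(α + 2) l²)) / (2 l²) (or with the minus sign before the square root), and suppose δ > 0. Let ω₁ ≥ ω₂ > 0 be the characteristic frequencies, i.e., ω₁², ω₂² are the roots of σ² − ((α + 1)β² + δ)/(αβ²) σ + δ/(αβ²). Then the frequency ratio satisfies ω₁/ω₂ = l or ω₁/ω₂ = 1/l; in particular, for l = n/m with integers n, m, the resonance relation m ω₁ − n ω₂ = 0 (or n ω₁ − m ω₂ = 0) holds. -/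

import Mathlib

/-- If `δ` is given by the resonance-curve formula
`δ = β²(α + αl⁴ − 2l² ± √α(l²+1)√(α + αl⁴ − 2(α+2)l²))/(2l²)` (either sign) and `δ > 0`,
then the characteristic frequencies satisfy `ω₁/ω₂ = l` or `ω₁/ω₂ = 1/l`; in particular for
`l = n/m` the resonance relation `mω₁ − nω₂ = 0` (or `nω₁ − mω₂ = 0`) holds. -/
theorem resonance_curve_formula (α β l ε δ ω₁ ω₂ : ℝ)
    (hα : 0 < α) (hβ : β ≠ 0) (hl : 0 < l)
    (hD : 0 ≤ α + α * l ^ 4 - 2 * (α + 2) * l ^ 2)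
    (hε : ε = 1 ∨ ε = -1)
    (hδdef : δ = β ^ 2 * (α + α * l ^ 4 - 2 * l ^ 2
        + ε * Real.sqrt α * (l ^ 2 + 1)
          * Real.sqrt (α + α * l ^ 4 - 2 * (α + 2) * l ^ 2)) / (2 * l ^ 2))
    (hδ : 0 < δ)
    (hord : ω₂ ≤ ω₁) (hpos : 0 < ω₂)
    (hroots : ∀ σ : ℝ,
      σ ^ 2 - ((α + 1) * β ^ 2 + δ) / (α * β ^ 2) * σ + δ / (α * β ^ 2)
        = (σ - ω₁ ^ 2) * (σ - ω₂ ^ 2)) :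
    ω₁ / ω₂ = l ∨ ω₁ / ω₂ = 1 / l := by
  have hβ2 : (0:ℝ) < β ^ 2 := by positivity
  have hαβ : α * β ^ 2 ≠ 0 := by positivity
  have hl2 : (l:ℝ) ^ 2 ≠ 0 := by positivity
  have hω1 : 0 < ω₁ := lt_of_lt_of_le hpos hord
  have hε2 : ε ^ 2 = 1 := by rcases hε with rfl | rfl <;> norm_num
  have hsA : Real.sqrt α ^ 2 = α := Real.sq_sqrt hα.le
  have hsD : Real.sqrt (α + α * l ^ 4 - 2 * (α + 2) * l ^ 2) ^ 2
      = α + α * l ^ 4 - 2 * (α + 2) * l ^ 2 := Real.sq_sqrt hD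
  set sA := Real.sqrt α
  set sD := Real.sqrt (α + α * l ^ 4 - 2 * (α + 2) * l ^ 2)
  -- clear denominators in hδdef
  have h2 : δ * (2 * l ^ 2) = β ^ 2 * (α + α * l ^ 4 - 2 * l ^ 2
      + ε * sA * (l ^ 2 + 1) * sD) := by
    rw [hδdef]; field_simp
  have hsq : (δ * (2 * l ^ 2) - β ^ 2 * (α + α * l ^ 4 - 2 * l ^ 2)) ^ 2
      = β ^ 4 * (α * (l ^ 2 + 1) ^ 2 * (α + α * l ^ 4 - 2 * (α + 2) * l ^ 2)) := by
    have hL : δ * (2 * l ^ 2) - β ^ 2 * (α + α * l ^ 4 - 2 * l ^ 2)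
        = β ^ 2 * (ε * sA * (l ^ 2 + 1) * sD) := by linear_combination h2
    rw [hL]
    linear_combination (β ^ 4 * (l ^ 2 + 1) ^ 2 * sA ^ 2 * sD ^ 2) * hε2
      + (β ^ 4 * (l ^ 2 + 1) ^ 2 * sD ^ 2) * hsA
      + (β ^ 4 * (l ^ 2 + 1) ^ 2 * α) * hsD
  have key : (4 * l ^ 2) * (l ^ 2 * ((α + 1) * β ^ 2 + δ) ^ 2)
      = (4 * l ^ 2) * ((l ^ 2 + 1) ^ 2 * (α * β ^ 2) * δ) := by
    linear_combination hsq
  -- extract sum and product of roots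
  have h0 := hroots 0
  have h1 := hroots 1
  have hP : δ = α * β ^ 2 * (ω₁ ^ 2 * ω₂ ^ 2) := by
    field_simp at h0
    linear_combination h0
  have hS : (α + 1) * β ^ 2 + δ = α * β ^ 2 * (ω₁ ^ 2 + ω₂ ^ 2) := by
    field_simp at h0 h1
    linear_combination h0 - h1
  have key2 : (4 * l ^ 2 * (α * β ^ 2) ^ 2) * (l ^ 2 * (ω₁ ^ 2 + ω₂ ^ 2) ^ 2)
      = (4 * l ^ 2 * (α * β ^ 2) ^ 2) * ((l ^ 2 + 1) ^ 2 * (ω₁ ^ 2 * ω₂ ^ 2)) := by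
    linear_combination key + (4 * l ^ 2 * (l ^ 2 + 1) ^ 2 * (α * β ^ 2)) * hP
      - (4 * l ^ 2 * l ^ 2 * ((α + 1) * β ^ 2 + δ + α * β ^ 2 * (ω₁ ^ 2 + ω₂ ^ 2))) * hS
  have hne : (4 * l ^ 2 * (α * β ^ 2) ^ 2) ≠ 0 := by positivity
  have key3 : l ^ 2 * (ω₁ ^ 2 + ω₂ ^ 2) ^ 2 = (l ^ 2 + 1) ^ 2 * (ω₁ ^ 2 * ω₂ ^ 2) :=
    mul_left_cancel₀ hne key2
  have hfact : (l ^ 2 * ω₁ ^ 2 - ω₂ ^ 2) * (ω₁ ^ 2 - l ^ 2 * ω₂ ^ 2) = 0 := by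
    linear_combination key3
  rcases mul_eq_zero.mp hfact with h | h
  · -- l² ω₁² = ω₂², so ω₂ = l ω₁, ratio = 1/l
    right
    have h4 : (ω₂ - l * ω₁) * (ω₂ + l * ω₁) = 0 := by linear_combination -h
    rcases mul_eq_zero.mp h4 with h5 | h5
    · have : ω₂ = l * ω₁ := by linarith
      rw [this]
      field_simp
    · have hpos2 : 0 < ω₂ + l * ω₁ := by positivity
      linarith
  · -- ω₁² = l² ω₂², so ω₁ = l ω₂, ratio = l
    left
    have h4 : (ω₁ - l * ω₂) * (ω₁ + l * ω₂) = 0 := by linear_combination h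
    rcases mul_eq_zero.mp h4 with h5 | h5
    · have : ω₁ = l * ω₂ := by linarith
      rw [this]
      field_simp
    · have hpos2 : 0 < ω₁ + l * ω₂ := by positivity
      linarith
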